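/- In the setting of the multi-block augmented Lagrangian with K blocks, suppose that for each k: f_k is differentiable and L_k-smooth; h_k is differentiable; f_k + h_k is bounded below on E_k; ρ_k ≥ L_k; the per-iteration hypotheses hold at every t (namely each y_k-update exactly minimizes a γ̃_k-strongly convex subproblem with γ̃_k ≥ 0, each x_k-update exactly minimizes a γ_k-strongly convex subproblem so that ∇f_k(x_k^{t+1}) + μ_k^t + ρ_k(x_k^{t+1} − y_k^{t+1}) = 0, and μ_k^{t+1} = μ_k^t + ρ_k(x_k^{t+1} − y_k^{t+1})); and ρ_k γ_k ≥ 2 L_k². Then the sequence 𝐋^t = L({x_k^t}, {y_k^t}, {μ_k^t}) is monotonically decreasing (for t ≥ 1), bounded below by a finite constant, and therefore convergent: lim_{t→∞} 𝐋^t = 𝐋* > −∞. -/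

import Mathlib

open scoped RealInnerProductSpace

lemma sum_update_eq {ι : Type*} [Fintype ι] [DecidableEq ι] {M : ι → Type*}
    (g : ∀ i, M i → ℝ) (y : ∀ i, M i) (k : ι) (z : M k) :
    ∑ i, g i (Function.update y k z i) = (∑ i, g i (y i)) - g k (y k) + g k z := by
  have h1 : ∑ i ∈ Finset.univ.erase k, g i (Function.update y k z i)
      = ∑ i ∈ Finset.univ.erase k, g i (y i) :=
    Finset.sum_congr rfl fun i hi => by
      rw [Function.update_of_ne (Finset.ne_of_mem_erase hi)]
  rw [← Finset.add_sum_erase _ _ (Finset.mem_univ k),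
    ← Finset.add_sum_erase _ (fun i => g i (y i)) (Finset.mem_univ k), h1,
    Function.update_self]
  ring

lemma strong_min {E : Type*} [NormedAddCommGroup E] [InnerProductSpace ℝ E]
    {φ : E → ℝ} {γ : ℝ}
    (hc : ConvexOn ℝ Set.univ (fun z => φ z - γ / 2 * ‖z‖ ^ 2))
    {m : E} (hm : ∀ z, φ m ≤ φ z) (z : E) :
    φ m + γ / 2 * ‖z - m‖ ^ 2 ≤ φ z := by
  have hsc : StrongConvexOn Set.univ γ φ := strongConvexOn_iff_convex.mpr hc
  have key : ∀ a : ℝ, a ∈ Set.Ioo (0:ℝ) 1 →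
      (1 - a) * (γ / 2 * ‖z - m‖ ^ 2) ≤ φ z - φ m := by
    rintro a ⟨ha0, ha1⟩
    have hb0 : (0:ℝ) ≤ 1 - a := by linarith
    have h1 := hsc.2 (Set.mem_univ z) (Set.mem_univ m) ha0.le hb0 (by ring)
    simp only [smul_eq_mul] at h1
    have h2 := hm (a • z + (1 - a) • m)
    nlinarith [mul_pos ha0 (sub_pos.mpr ha1)]
  have hev : ∀ᶠ a in nhdsWithin (0:ℝ) (Set.Ioi 0),
      (1 - a) * (γ / 2 * ‖z - m‖ ^ 2) ≤ φ z - φ m := by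
    filter_upwards [eventually_mem_nhdsWithin,
      eventually_nhdsWithin_of_eventually_nhds
        (Filter.Tendsto.eventually_lt_const (by norm_num : (0:ℝ) < 1) Filter.tendsto_id)] with a h1 h2
    exact key a ⟨h1, h2⟩
  have hten : Filter.Tendsto (fun a : ℝ => (1 - a) * (γ / 2 * ‖z - m‖ ^ 2))
      (nhdsWithin (0:ℝ) (Set.Ioi 0)) (nhds ((1 - 0) * (γ / 2 * ‖z - m‖ ^ 2))) :=
    (Filter.Tendsto.mul ((continuous_const.sub continuous_id).tendsto 0) tendsto_const_nhds).mono_left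
      nhdsWithin_le_nhds
  have := le_of_tendsto hten hev
  simp only [sub_zero, one_mul] at this
  linarith

lemma smooth_ub {E : Type*} [NormedAddCommGroup E] [InnerProductSpace ℝ E] [CompleteSpace E]
    {f : E → ℝ} {L : ℝ} (hd : Differentiable ℝ f)
    (hs : ∀ a a' : E, ‖gradient f a - gradient f a'‖ ≤ L * ‖a - a'‖) (x y : E) :
    f y ≤ f x + ⟪gradient f x, y - x⟫ + L / 2 * ‖y - x‖ ^ 2 := by
  set d := y - x with hdd
  have hgrad : ∀ a : E, HasFDerivAt f ((InnerProductSpace.toDual ℝ E) (gradient f a)) a :=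
    fun a => hasGradientAt_iff_hasFDerivAt.mp (hd a).hasGradientAt
  have hline : ∀ s : ℝ, HasDerivAt (fun s : ℝ => f (x + s • d)) ⟪gradient f (x + s • d), d⟫ s := by
    intro s
    have h1 : HasDerivAt (fun s : ℝ => x + s • d) d s := by
      simpa using ((hasDerivAt_id s).smul_const d).const_add x
    have := (hgrad (x + s • d)).comp_hasDerivAt s h1
    simpa [Function.comp_def, InnerProductSpace.toDual_apply_apply] using this
  set g : ℝ → ℝ := fun s => f (x + s • d) - s * ⟪gradient f x, d⟫ - L / 2 * s ^ 2 * ‖d‖ ^ 2 with hgdef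
  have hg' : ∀ s : ℝ, HasDerivAt g
      (⟪gradient f (x + s • d), d⟫ - ⟪gradient f x, d⟫ - L * s * ‖d‖ ^ 2) s := by
    intro s
    have h2 : HasDerivAt (fun s : ℝ => s * ⟪gradient f x, d⟫) ⟪gradient f x, d⟫ s := by
      simpa using (hasDerivAt_id s).mul_const ⟪gradient f x, d⟫
    have h3 : HasDerivAt (fun s : ℝ => L / 2 * s ^ 2 * ‖d‖ ^ 2) (L * s * ‖d‖ ^ 2) s := by
      have := ((hasDerivAt_pow 2 s).const_mul (L / 2)).mul_const (‖d‖ ^ 2)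
      refine this.congr_deriv ?_
      rw [show (2:ℕ) - 1 = 1 from rfl]
      push_cast
      ring
    exact ((hline s).sub h2).sub h3
  have hdg : Differentiable ℝ g := fun s => (hg' s).differentiableAt
  have hderiv : ∀ s ∈ interior (Set.Icc (0:ℝ) 1), deriv g s ≤ 0 := by
    rw [interior_Icc]
    rintro s ⟨hs0, _⟩
    rw [(hg' s).deriv]
    have h4 : ⟪gradient f (x + s • d) - gradient f x, d⟫
        ≤ ‖gradient f (x + s • d) - gradient f x‖ * ‖d‖ := real_inner_le_norm _ _
    have h5 : ‖gradient f (x + s • d) - gradient f x‖ ≤ L * (s * ‖d‖) := by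
      have := hs (x + s • d) x
      simpa [norm_smul, abs_of_pos hs0] using this
    rw [inner_sub_left] at h4
    nlinarith [norm_nonneg d, mul_le_mul_of_nonneg_right h5 (norm_nonneg d)]
  have hanti := antitoneOn_of_deriv_nonpos (convex_Icc (0:ℝ) 1)
    hdg.continuous.continuousOn hdg.differentiableOn hderiv
  have := hanti (Set.left_mem_Icc.mpr zero_le_one) (Set.right_mem_Icc.mpr zero_le_one) zero_le_one
  have hxy : x + d = y := by rw [hdd]; abel
  simp only [hgdef, one_smul, zero_smul, add_zero, zero_mul, one_pow, mul_one, hxy] at this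
  linarith [this]

/-- In the multi-block augmented Lagrangian setting, if each `f_k` is `L_k`-smooth,
each `h_k` is differentiable, each `f_k + h_k` is bounded below, `ρ_k ≥ L_k`, `γ̃_k ≥ 0`,
`ρ_k γ_k ≥ 2 L_k²`, and the per-iteration (exact strongly convex block minimization and dual
update) hypotheses hold, then the sequence `𝐋^t = L({x^t},{y^t},{μ^t})` is monotonically
decreasing (for `t ≥ 1`), bounded below, and convergent to a finite limit. -/
theorem stmt5 {K : ℕ} (E : Fin K → Type*)
    [∀ k, NormedAddCommGroup (E k)] [∀ k, InnerProductSpace ℝ (E k)]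
    [∀ k, FiniteDimensional ℝ (E k)]
    (f h : ∀ k, E k → ℝ) (L ρ γ γ' : Fin K → ℝ)
    (hdiff : ∀ k, Differentiable ℝ (f k))
    (hsmooth : ∀ k, ∀ a a' : E k,
      ‖gradient (f k) a - gradient (f k) a'‖ ≤ L k * ‖a - a'‖)
    (hdiffh : ∀ k, Differentiable ℝ (h k))
    (hbelow : ∀ k, ∃ B : ℝ, ∀ z : E k, B ≤ f k z + h k z)
    (hρ : ∀ k, 0 < ρ k)
    (hρL : ∀ k, L k ≤ ρ k)
    (hγ' : ∀ k, 0 ≤ γ' k)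
    (hργ : ∀ k, 2 * L k ^ 2 ≤ ρ k * γ k)
    (Lag : (∀ k, E k) → (∀ k, E k) → (∀ k, E k) → ℝ)
    (hLag : ∀ x y μ, Lag x y μ =
      ∑ k, (f k (x k) + h k (y k) + ⟪μ k, x k - y k⟫ + (ρ k / 2) * ‖x k - y k‖ ^ 2))
    (x y μ : ℕ → ∀ k, E k)
    (hyconv : ∀ (t : ℕ) (k : Fin K), ConvexOn ℝ Set.univ
      (fun z : E k => Lag (x t) (Function.update (y t) k z) (μ t) - (γ' k / 2) * ‖z‖ ^ 2))
    (hymin : ∀ (t : ℕ) (k : Fin K), ∀ z : E k,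
      Lag (x t) (Function.update (y t) k (y (t + 1) k)) (μ t) ≤
        Lag (x t) (Function.update (y t) k z) (μ t))
    (hxconv : ∀ (t : ℕ) (k : Fin K), ConvexOn ℝ Set.univ
      (fun z : E k => Lag (Function.update (x t) k z) (y (t + 1)) (μ t)
        - (γ k / 2) * ‖z‖ ^ 2))
    (hxmin : ∀ (t : ℕ) (k : Fin K), ∀ z : E k,
      Lag (Function.update (x t) k (x (t + 1) k)) (y (t + 1)) (μ t) ≤
        Lag (Function.update (x t) k z) (y (t + 1)) (μ t))
    (hopt : ∀ (t : ℕ) (k : Fin K), gradient (f k) (x (t + 1) k) + μ t k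
        + ρ k • (x (t + 1) k - y (t + 1) k) = 0)
    (hdual : ∀ (t : ℕ) (k : Fin K),
      μ (t + 1) k = μ t k + ρ k • (x (t + 1) k - y (t + 1) k)) :
    (∀ t : ℕ, 1 ≤ t →
      Lag (x (t + 1)) (y (t + 1)) (μ (t + 1)) ≤ Lag (x t) (y t) (μ t)) ∧
    (∃ B : ℝ, ∀ t : ℕ, B ≤ Lag (x t) (y t) (μ t)) ∧
    (∃ Lstar : ℝ, Filter.Tendsto (fun t => Lag (x t) (y t) (μ t))
      Filter.atTop (nhds Lstar)) := by
  -- y-step descent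
  have ydec : ∀ t, Lag (x t) (y (t + 1)) (μ t) ≤ Lag (x t) (y t) (μ t) := by
    intro t
    have hLg : ∀ w, Lag (x t) w (μ t) = ∑ j, (fun j (b : E j) =>
        f j (x t j) + h j b + ⟪μ t j, x t j - b⟫ + (ρ j / 2) * ‖x t j - b‖ ^ 2) j (w j) :=
      fun w => hLag _ _ _
    have hblock : ∀ k, (fun j (b : E j) =>
        f j (x t j) + h j b + ⟪μ t j, x t j - b⟫ + (ρ j / 2) * ‖x t j - b‖ ^ 2) k (y (t + 1) k)
        ≤ (fun j (b : E j) =>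
        f j (x t j) + h j b + ⟪μ t j, x t j - b⟫ + (ρ j / 2) * ‖x t j - b‖ ^ 2) k (y t k) := by
      intro k
      have hm := hymin t k (y t k)
      rw [Function.update_eq_self] at hm
      rw [hLg, hLg] at hm
      have heq := sum_update_eq (fun j (b : E j) =>
        f j (x t j) + h j b + ⟪μ t j, x t j - b⟫ + (ρ j / 2) * ‖x t j - b‖ ^ 2)
        (y t) k (y (t + 1) k)
      simp only at hm heq ⊢
      linarith
    rw [hLg (y (t + 1)), hLg (y t)]
    exact Finset.sum_le_sum fun k _ => hblock k
  -- nonnegativity of γ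
  have γnn : ∀ k, 0 ≤ γ k := by
    intro k
    by_contra hc
    push_neg at hc
    nlinarith [hργ k, sq_nonneg (L k), mul_pos (hρ k) (neg_pos.mpr hc)]
  -- x-step descent with strong convexity
  have xdec : ∀ t, Lag (x (t + 1)) (y (t + 1)) (μ t)
      + ∑ k, γ k / 2 * ‖x (t + 1) k - x t k‖ ^ 2 ≤ Lag (x t) (y (t + 1)) (μ t) := by
    intro t
    have hLg : ∀ w, Lag w (y (t + 1)) (μ t) = ∑ j, (fun j (a : E j) =>
        f j a + h j (y (t + 1) j) + ⟪μ t j, a - y (t + 1) j⟫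
          + (ρ j / 2) * ‖a - y (t + 1) j‖ ^ 2) j (w j) :=
      fun w => hLag _ _ _
    have hblock : ∀ k, (fun j (a : E j) =>
        f j a + h j (y (t + 1) j) + ⟪μ t j, a - y (t + 1) j⟫
          + (ρ j / 2) * ‖a - y (t + 1) j‖ ^ 2) k (x (t + 1) k)
          + γ k / 2 * ‖x (t + 1) k - x t k‖ ^ 2
        ≤ (fun j (a : E j) =>
        f j a + h j (y (t + 1) j) + ⟪μ t j, a - y (t + 1) j⟫
          + (ρ j / 2) * ‖a - y (t + 1) j‖ ^ 2) k (x t k) := by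
      intro k
      have hsm := strong_min (hxconv t k) (hxmin t k) (x t k)
      simp only [Function.update_eq_self] at hsm
      rw [hLg, hLg, norm_sub_rev] at hsm
      have heq := sum_update_eq (fun j (a : E j) =>
        f j a + h j (y (t + 1) j) + ⟪μ t j, a - y (t + 1) j⟫
          + (ρ j / 2) * ‖a - y (t + 1) j‖ ^ 2) (x t) k (x (t + 1) k)
      simp only at hsm heq ⊢
      linarith
    rw [hLg (x (t + 1)), hLg (x t), ← Finset.sum_add_distrib]
    exact Finset.sum_le_sum fun k _ => hblock k
  -- dual update identity
  have μeq : ∀ t, Lag (x (t + 1)) (y (t + 1)) (μ (t + 1)) = Lag (x (t + 1)) (y (t + 1)) (μ t)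
      + ∑ k, ρ k * ‖x (t + 1) k - y (t + 1) k‖ ^ 2 := by
    intro t
    rw [hLag, hLag, ← Finset.sum_add_distrib]
    refine Finset.sum_congr rfl fun k _ => ?_
    rw [hdual t k, inner_add_left, real_inner_smul_left, real_inner_self_eq_norm_sq]
    ring
  -- the dual variable equals the negative gradient
  have hμgrad : ∀ t k, μ (t + 1) k = - gradient (f k) (x (t + 1) k) := by
    intro t k
    have h0 : gradient (f k) (x (t + 1) k)
        + (μ t k + ρ k • (x (t + 1) k - y (t + 1) k)) = 0 := by
      rw [← add_assoc]; exact hopt t k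
    rw [hdual t k]
    exact eq_neg_of_add_eq_zero_right h0
  -- bound on dual ascent term
  have hbound : ∀ t, 1 ≤ t → ∀ k, ρ k * ‖x (t + 1) k - y (t + 1) k‖ ^ 2
      ≤ γ k / 2 * ‖x (t + 1) k - x t k‖ ^ 2 := by
    intro t ht k
    obtain ⟨s, rfl⟩ : ∃ s, t = s + 1 := ⟨t - 1, by omega⟩
    have hd1 : ρ k • (x (s + 1 + 1) k - y (s + 1 + 1) k)
        = gradient (f k) (x (s + 1) k) - gradient (f k) (x (s + 1 + 1) k) := by
      have e : gradient (f k) (x (s + 1) k) - gradient (f k) (x (s + 1 + 1) k)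
          = (- gradient (f k) (x (s + 1 + 1) k)) - (- gradient (f k) (x (s + 1) k)) := by abel
      rw [e, ← hμgrad (s + 1) k, ← hμgrad s k, hdual (s + 1) k]
      abel
    have hn : ρ k * ‖x (s + 1 + 1) k - y (s + 1 + 1) k‖
        ≤ L k * ‖x (s + 1 + 1) k - x (s + 1) k‖ := by
      have h1 : ‖ρ k • (x (s + 1 + 1) k - y (s + 1 + 1) k)‖
          = ρ k * ‖x (s + 1 + 1) k - y (s + 1 + 1) k‖ := by
        rw [norm_smul, Real.norm_eq_abs, abs_of_pos (hρ k)]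
      rw [← h1, hd1, show ‖x (s + 1 + 1) k - x (s + 1) k‖ = ‖x (s + 1) k - x (s + 1 + 1) k‖
        from norm_sub_rev _ _]
      exact hsmooth k _ _
    set A := ‖x (s + 1 + 1) k - y (s + 1 + 1) k‖ with hA
    set Bq := ‖x (s + 1 + 1) k - x (s + 1) k‖ with hBq
    have hA0 : 0 ≤ ρ k * A := mul_nonneg (hρ k).le (norm_nonneg _)
    have h2 : (ρ k * A) * (ρ k * A) ≤ (L k * Bq) * (L k * Bq) :=
      mul_le_mul hn hn hA0 (le_trans hA0 hn)
    nlinarith [hρ k, mul_le_mul_of_nonneg_right (hργ k) (sq_nonneg Bq), sq_nonneg A]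
  -- Part 1: monotone decrease
  have part1 : ∀ t, 1 ≤ t →
      Lag (x (t + 1)) (y (t + 1)) (μ (t + 1)) ≤ Lag (x t) (y t) (μ t) := by
    intro t ht
    have h1 := μeq t
    have h2 := xdec t
    have h3 := ydec t
    have h4 : ∑ k, ρ k * ‖x (t + 1) k - y (t + 1) k‖ ^ 2
        ≤ ∑ k, γ k / 2 * ‖x (t + 1) k - x t k‖ ^ 2 :=
      Finset.sum_le_sum fun k _ => hbound t ht k
    linarith
  -- Part 2: lower bound
  have lower : ∀ t, 1 ≤ t →
      ∑ k, Classical.choose (hbelow k) ≤ Lag (x t) (y t) (μ t) := by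
    intro t ht
    obtain ⟨s, rfl⟩ : ∃ s, t = s + 1 := ⟨t - 1, by omega⟩
    rw [hLag]
    refine Finset.sum_le_sum fun k _ => ?_
    have hB := Classical.choose_spec (hbelow k) (y (s + 1) k)
    have hub := smooth_ub (hdiff k) (hsmooth k) (x (s + 1) k) (y (s + 1) k)
    rw [hμgrad s k]
    have e1 : ⟪-gradient (f k) (x (s + 1) k), x (s + 1) k - y (s + 1) k⟫
        = - ⟪gradient (f k) (x (s + 1) k), x (s + 1) k - y (s + 1) k⟫ := inner_neg_left _ _
    have e2 : ⟪gradient (f k) (x (s + 1) k), y (s + 1) k - x (s + 1) k⟫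
        = - ⟪gradient (f k) (x (s + 1) k), x (s + 1) k - y (s + 1) k⟫ := by
      rw [show y (s + 1) k - x (s + 1) k = -(x (s + 1) k - y (s + 1) k) by abel, inner_neg_right]
    have e3 : ‖y (s + 1) k - x (s + 1) k‖ = ‖x (s + 1) k - y (s + 1) k‖ := norm_sub_rev _ _
    rw [e1]
    rw [e2, e3] at hub
    have e4 : L k / 2 * ‖x (s + 1) k - y (s + 1) k‖ ^ 2
        ≤ ρ k / 2 * ‖x (s + 1) k - y (s + 1) k‖ ^ 2 := by
      nlinarith [sq_nonneg ‖x (s + 1) k - y (s + 1) k‖, hρL k]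
    linarith
  refine ⟨part1, ?_, ?_⟩
  · refine ⟨min (Lag (x 0) (y 0) (μ 0)) (∑ k, Classical.choose (hbelow k)), fun t => ?_⟩
    rcases Nat.eq_zero_or_pos t with rfl | ht
    · exact min_le_left _ _
    · exact le_trans (min_le_right _ _) (lower t ht)
  · have hant : Antitone (fun n => Lag (x (n + 1)) (y (n + 1)) (μ (n + 1))) :=
      antitone_nat_of_succ_le fun n => part1 (n + 1) (by omega)
    have hbdd : BddBelow (Set.range fun n => Lag (x (n + 1)) (y (n + 1)) (μ (n + 1))) := by
      refine ⟨∑ k, Classical.choose (hbelow k), ?_⟩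
      rintro _ ⟨n, rfl⟩
      exact lower (n + 1) (by omega)
    have := tendsto_atTop_ciInf hant hbdd
    exact ⟨_, (Filter.tendsto_add_atTop_iff_nat 1).mp this⟩
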